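/- Let x_0,…,x_n ∈ ℝ^n be affinely independent, let a ∈ ℝ^n lie outside the convex hull of {x_0,…,x_n}, and let λ_0,…,λ_n be the (unique) barycentric coordinates of a, i.e. Σ_k λ_k = 1 and a = Σ_k λ_k x_k. Set I := { i : λ_i > 0 } and J := { j : λ_j < 0 }, and define K_i := { a + Σ_{k≠i} s_k (x_k − a) : s_k ≥ 0 for all k ≠ i }. Then ⋃_{i∈I} K_i = ⋃_{j∈J} K_j, and for every k with λ_k = 0 the cone K_k has Lebesgue measure zero in ℝ^n. -/

import Mathlib

open Finset MeasureTheory Pointwise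

/-- The infinite cone `K_i = { a + Σ_{k≠i} s_k (x_k − a) : s_k ≥ 0 }` over the `i`-th
facet of the simplex `[x_0,…,x_n]`, with apex `a`. -/
def facetCone (n : ℕ) (x : Fin (n + 1) → (Fin n → ℝ)) (a : Fin n → ℝ)
    (i : Fin (n + 1)) : Set (Fin n → ℝ) :=
  { p | ∃ s : Fin (n + 1) → ℝ, (∀ k, k ≠ i → 0 ≤ s k) ∧
      p = a + ∑ k ∈ Finset.univ.erase i, s k • (x k - a) }

/-- Key moving lemma: if `Σ μ_k (x_k - a) = 0`, `μ_i > 0`, and some `μ_j < 0`, then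
a point of the cone `K_i` lies in some cone `K_j` with `μ_j < 0`. -/
lemma facetCone_move (n : ℕ) (x : Fin (n + 1) → (Fin n → ℝ)) (a : Fin n → ℝ)
    (μ : Fin (n + 1) → ℝ) (hrel : ∑ k, μ k • (x k - a) = 0)
    (i : Fin (n + 1)) (hi : 0 < μ i) (hneg : ∃ j, μ j < 0)
    (p : Fin n → ℝ) (hp : p ∈ facetCone n x a i) :
    ∃ j, μ j < 0 ∧ p ∈ facetCone n x a j := by
  obtain ⟨s, hs, hps⟩ := hp
  set v : Fin (n + 1) → (Fin n → ℝ) := fun k => x k - a with hv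
  set s' : Fin (n + 1) → ℝ := Function.update s i 0 with hs'
  have hs'nn : ∀ k, 0 ≤ s' k := by
    intro k
    by_cases h : k = i
    · simp [hs', h]
    · simpa [hs', Function.update_of_ne h] using hs k h
  have hsum' : ∑ k, s' k • v k = ∑ k ∈ univ.erase i, s k • v k := by
    rw [← Finset.add_sum_erase _ _ (Finset.mem_univ i)]
    have h1 : s' i = 0 := by simp [hs']
    rw [h1, zero_smul, zero_add]
    exact Finset.sum_congr rfl fun k hk => by
      rw [hs', Function.update_of_ne (Finset.ne_of_mem_erase hk)]
  obtain ⟨j0, hj0⟩ := hneg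
  have hT : j0 ∈ univ.filter (fun k => μ k < 0) := by simp [hj0]
  obtain ⟨j, hjT, hjmin⟩ :=
    (univ.filter (fun k => μ k < 0)).exists_min_image (fun k => s' k / (-μ k)) ⟨j0, hT⟩
  have hμj : μ j < 0 := (Finset.mem_filter.mp hjT).2
  set c : ℝ := s' j / (-μ j) with hc
  have hcnn : 0 ≤ c := div_nonneg (hs'nn j) (by linarith)
  set t : Fin (n + 1) → ℝ := fun k => s' k + c * μ k with ht
  have htj : t j = 0 := by
    have hμj0 : -μ j ≠ 0 := by linarith
    simp only [ht, hc]
    field_simp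
    rw [div_self (ne_of_lt hμj)]; ring
  have htnn : ∀ k, k ≠ j → 0 ≤ t k := by
    intro k _
    by_cases hk : μ k < 0
    · have hkT : k ∈ univ.filter (fun k => μ k < 0) := by simp [hk]
      have := hjmin k hkT
      have h2 : c * (-μ k) ≤ s' k := by
        rw [hc]
        calc s' j / (-μ j) * (-μ k) ≤ s' k / (-μ k) * (-μ k) := by
              apply mul_le_mul_of_nonneg_right this (by linarith)
          _ = s' k := div_mul_cancel₀ (s' k) (by linarith)
      simp only [ht]; nlinarith
    · push_neg at hk
      have := hs'nn k
      have := mul_nonneg hcnn hk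
      simp only [ht]; linarith
  refine ⟨j, hμj, t, htnn, ?_⟩
  have hsumt : ∑ k ∈ univ.erase j, t k • v k = ∑ k, t k • v k := by
    rw [← Finset.add_sum_erase _ _ (Finset.mem_univ j), htj, zero_smul, zero_add]
  have hexp : ∑ k, t k • v k = ∑ k, s' k • v k + c • ∑ k, μ k • v k := by
    rw [Finset.smul_sum, ← Finset.sum_add_distrib]
    exact Finset.sum_congr rfl fun k _ => by
      simp only [ht, add_smul, smul_smul]
  rw [hps, hsumt, hexp, hrel, smul_zero, add_zero, hsum']

theorem stmt11 (n : ℕ) (x : Fin (n + 1) → (Fin n → ℝ)) (a : Fin n → ℝ)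
    (hx : AffineIndependent ℝ x)
    (ha : a ∉ convexHull ℝ (Set.range x))
    (lam : Fin (n + 1) → ℝ)
    (hsum : ∑ k, lam k = 1) (hbary : a = ∑ k, lam k • x k) :
    (⋃ i ∈ {i : Fin (n + 1) | 0 < lam i}, facetCone n x a i)
      = (⋃ j ∈ {j : Fin (n + 1) | lam j < 0}, facetCone n x a j) ∧
    ∀ k : Fin (n + 1), lam k = 0 → MeasureTheory.volume (facetCone n x a k) = 0 := by
  have hrel : ∑ k, lam k • (x k - a) = 0 := by
    have h1 : ∑ k, lam k • (x k - a) = (∑ k, lam k • x k) - (∑ k, lam k) • a := by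
      rw [Finset.sum_smul]
      rw [← Finset.sum_sub_distrib]
      exact Finset.sum_congr rfl fun k _ => smul_sub _ _ _
    rw [h1, hsum, ← hbary, one_smul, sub_self]
  have hJ : ∃ j, lam j < 0 := by
    by_contra h
    push_neg at h
    apply ha
    have := Finset.centerMass_mem_convexHull Finset.univ
      (fun k _ => h k) (by rw [hsum]; norm_num)
      (fun k _ => Set.mem_range_self (f := x) k)
    rwa [Finset.centerMass_eq_of_sum_1 _ _ hsum, ← hbary] at this
  have hI : ∃ i, 0 < lam i := by
    by_contra h
    push_neg at h
    have : ∑ k, lam k ≤ 0 := Finset.sum_nonpos fun k _ => h k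
    rw [hsum] at this; linarith
  constructor
  · ext p
    simp only [Set.mem_iUnion, Set.mem_setOf_eq, exists_prop]
    constructor
    · rintro ⟨i, hi, hp⟩
      obtain ⟨j, hj, hpj⟩ := facetCone_move n x a lam hrel i hi hJ p hp
      exact ⟨j, hj, hpj⟩
    · rintro ⟨j, hj, hp⟩
      have hrel' : ∑ k, (-lam k) • (x k - a) = 0 := by
        simp only [neg_smul, Finset.sum_neg_distrib, hrel, neg_zero]
      obtain ⟨i, hi, hpi⟩ := facetCone_move n x a (fun k => -lam k) hrel' j
        (by simpa using hj) (by obtain ⟨i, hi⟩ := hI; exact ⟨i, by simpa using hi⟩) p hp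
      exact ⟨i, by simpa using hi, hpi⟩
  · intro k hk
    obtain ⟨j, hj⟩ := hJ
    have hjk : j ≠ k := fun h => by rw [h, hk] at hj; exact lt_irrefl 0 hj
    set w : {m : Fin (n + 1) // m ≠ k} → (Fin n → ℝ) := fun m => x m.1 - a with hw
    have hdep : ¬ LinearIndependent ℝ w := by
      intro h
      have h0 : ∑ m : {m : Fin (n + 1) // m ≠ k}, lam m.1 • w m = 0 := by
        have he : ∑ m : {m : Fin (n + 1) // m ≠ k}, lam m.1 • w m
            = ∑ m ∈ univ.erase k, lam m • (x m - a) := by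
          rw [Finset.sum_subtype (p := fun m => m ≠ k) (univ.erase k)
            (fun m => by simp) (fun m => lam m • (x m - a))]
        rw [he]
        have h2 : lam k • (x k - a) + ∑ m ∈ univ.erase k, lam m • (x m - a) = 0 := by
          rw [Finset.add_sum_erase _ (fun m => lam m • (x m - a)) (Finset.mem_univ k)]
          exact hrel
        rw [hk, zero_smul, zero_add] at h2
        exact h2
      have := Fintype.linearIndependent_iff.mp h (fun m => lam m.1) h0 ⟨j, hjk⟩
      exact absurd this (ne_of_lt hj)
    have hcard : Fintype.card {m : Fin (n + 1) // m ≠ k} = n := by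
      simp [Fintype.card_subtype_compl]
    have hfr : Module.finrank ℝ (Submodule.span ℝ (Set.range w)) < n := by
      have h1 := finrank_range_le_card (R := ℝ) w
      rw [Set.finrank] at h1
      rw [hcard] at h1
      rcases lt_or_eq_of_le h1 with h | h
      · exact h
      · exfalso
        apply hdep
        rw [linearIndependent_iff_card_eq_finrank_span, hcard]
        rw [Set.finrank]
        exact h.symm
    set W := Submodule.span ℝ (Set.range w) with hW
    have hWtop : W ≠ ⊤ := by
      intro h
      rw [h] at hfr
      rw [finrank_top] at hfr
      simp [Module.finrank_pi] at hfr
    have hsub : facetCone n x a k ⊆ (a +ᵥ (W : Set (Fin n → ℝ))) := by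
      rintro p ⟨s, hs, hps⟩
      have hmem : ∑ m ∈ univ.erase k, s m • (x m - a) ∈ W := by
        apply Submodule.sum_mem
        intro m hm
        exact Submodule.smul_mem _ _
          (Submodule.subset_span ⟨⟨m, Finset.ne_of_mem_erase hm⟩, rfl⟩)
      exact ⟨_, hmem, hps.symm⟩
    refine measure_mono_null hsub ?_
    rw [measure_vadd]
    exact Measure.addHaar_submodule volume W hWtop
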